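/- The two autonomous Hamiltonians K₁ = -q₁²p₁ + p₁²/2 - α₂q₁ - q₂²p₂ + p₂²/2 - α₀q₂ + p₁p₂ and K₂ = q₁²p₁p₂ + q₂²p₁p₂ - 2q₁p₁q₂p₂ - α₀q₁p₁ - α₂q₂p₂ + α₀p₁q₂ + α₂q₁p₂ Poisson commute: {K₁,K₂} = 0. -/

import Mathlib

/-- K₁ of the autonomous degenerate Garnier system; coordinates (q₁,p₁,q₂,p₂). -/
noncomputable def K1 (α₀ α₂ : ℂ) (q : ℂ × ℂ × ℂ × ℂ) : ℂ :=
  -q.1 ^ 2 * q.2.1 + q.2.1 ^ 2 / 2 - α₂ * q.1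
    - q.2.2.1 ^ 2 * q.2.2.2 + q.2.2.2 ^ 2 / 2 - α₀ * q.2.2.1 + q.2.1 * q.2.2.2

/-- K₂ of the autonomous degenerate Garnier system. -/
noncomputable def K2 (α₀ α₂ : ℂ) (q : ℂ × ℂ × ℂ × ℂ) : ℂ :=
  q.1 ^ 2 * q.2.1 * q.2.2.2 + q.2.2.1 ^ 2 * q.2.1 * q.2.2.2
    - 2 * q.1 * q.2.1 * q.2.2.1 * q.2.2.2 - α₀ * q.1 * q.2.1 - α₂ * q.2.2.1 * q.2.2.2
    + α₀ * q.2.1 * q.2.2.1 + α₂ * q.1 * q.2.2.2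

/-- Partial derivatives in the directions q₁, p₁, q₂, p₂. -/
noncomputable def pq1 (f : ℂ × ℂ × ℂ × ℂ → ℂ) (p : ℂ × ℂ × ℂ × ℂ) : ℂ :=
  fderiv ℂ f p (1, 0, 0, 0)
noncomputable def pp1 (f : ℂ × ℂ × ℂ × ℂ → ℂ) (p : ℂ × ℂ × ℂ × ℂ) : ℂ :=
  fderiv ℂ f p (0, 1, 0, 0)
noncomputable def pq2 (f : ℂ × ℂ × ℂ × ℂ → ℂ) (p : ℂ × ℂ × ℂ × ℂ) : ℂ :=
  fderiv ℂ f p (0, 0, 1, 0)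
noncomputable def pp2 (f : ℂ × ℂ × ℂ × ℂ → ℂ) (p : ℂ × ℂ × ℂ × ℂ) : ℂ :=
  fderiv ℂ f p (0, 0, 0, 1)

/-- The Poisson bracket {F,G}. -/
noncomputable def pbracket (F G : ℂ × ℂ × ℂ × ℂ → ℂ) (p : ℂ × ℂ × ℂ × ℂ) : ℂ :=
  pp1 F p * pq1 G p - pq1 F p * pp1 G p + pp2 F p * pq2 G p - pq2 F p * pp2 G p

open ContinuousLinearMap in
theorem K1_K2_commute (α₀ α₂ : ℂ) (p : ℂ × ℂ × ℂ × ℂ) :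
    pbracket (K1 α₀ α₂) (K2 α₀ α₂) p = 0 := by
  have hx : HasFDerivAt (fun q : ℂ × ℂ × ℂ × ℂ => q.1) (fst ℂ ℂ (ℂ × ℂ × ℂ)) p := hasFDerivAt_fst
  have hy : HasFDerivAt (fun q : ℂ × ℂ × ℂ × ℂ => q.2.1)
      ((fst ℂ ℂ (ℂ × ℂ)).comp (snd ℂ ℂ (ℂ × ℂ × ℂ))) p :=
    hasFDerivAt_fst.comp p hasFDerivAt_snd
  have hz : HasFDerivAt (fun q : ℂ × ℂ × ℂ × ℂ => q.2.2.1)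
      (((fst ℂ ℂ ℂ).comp (snd ℂ ℂ (ℂ × ℂ))).comp (snd ℂ ℂ (ℂ × ℂ × ℂ))) p :=
    (hasFDerivAt_fst.comp p.2 hasFDerivAt_snd).comp p hasFDerivAt_snd
  have hw : HasFDerivAt (fun q : ℂ × ℂ × ℂ × ℂ => q.2.2.2)
      (((snd ℂ ℂ ℂ).comp (snd ℂ ℂ (ℂ × ℂ))).comp (snd ℂ ℂ (ℂ × ℂ × ℂ))) p :=
    (hasFDerivAt_snd.comp p.2 hasFDerivAt_snd).comp p hasFDerivAt_snd
  have eK1 : K1 α₀ α₂ = fun q : ℂ × ℂ × ℂ × ℂ =>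
      (q.1 * q.1) * q.2.1 * (-1) + (q.2.1 * q.2.1) * (2:ℂ)⁻¹ - α₂ * q.1
        - (q.2.2.1 * q.2.2.1) * q.2.2.2 + (q.2.2.2 * q.2.2.2) * (2:ℂ)⁻¹ - α₀ * q.2.2.1
        + q.2.1 * q.2.2.2 := by
    funext q; simp only [K1]; ring
  have eK2 : K2 α₀ α₂ = fun q : ℂ × ℂ × ℂ × ℂ =>
      (q.1 * q.1) * q.2.1 * q.2.2.2 + (q.2.2.1 * q.2.2.1) * q.2.1 * q.2.2.2
        - 2 * q.1 * q.2.1 * q.2.2.1 * q.2.2.2 - α₀ * q.1 * q.2.1 - α₂ * q.2.2.1 * q.2.2.2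
        + α₀ * q.2.1 * q.2.2.1 + α₂ * q.1 * q.2.2.2 := by
    funext q; simp only [K2]; ring
  have h1 : HasFDerivAt (fun q : ℂ × ℂ × ℂ × ℂ =>
      (q.1 * q.1) * q.2.1 * (-1) + (q.2.1 * q.2.1) * (2:ℂ)⁻¹ - α₂ * q.1
        - (q.2.2.1 * q.2.2.1) * q.2.2.2 + (q.2.2.2 * q.2.2.2) * (2:ℂ)⁻¹ - α₀ * q.2.2.1
        + q.2.1 * q.2.2.2) _ p := ((((((((hx.mul hx).mul hy).mul_const (-1)).add ((hy.mul hy).mul_const (2:ℂ)⁻¹)).sub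
      (hx.const_mul α₂)).sub ((hz.mul hz).mul hw)).add ((hw.mul hw).mul_const (2:ℂ)⁻¹)).sub
      (hz.const_mul α₀)).add (hy.mul hw)
  have h2 : HasFDerivAt (fun q : ℂ × ℂ × ℂ × ℂ =>
      (q.1 * q.1) * q.2.1 * q.2.2.2 + (q.2.2.1 * q.2.2.1) * q.2.1 * q.2.2.2
        - 2 * q.1 * q.2.1 * q.2.2.1 * q.2.2.2 - α₀ * q.1 * q.2.1 - α₂ * q.2.2.1 * q.2.2.2
        + α₀ * q.2.1 * q.2.2.1 + α₂ * q.1 * q.2.2.2) _ p := ((((((((hx.mul hx).mul hy).mul hw).add (((hz.mul hz).mul hy).mul hw)).sub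
      ((((hx.const_mul 2).mul hy).mul hz).mul hw)).sub ((hx.const_mul α₀).mul hy)).sub
      ((hz.const_mul α₂).mul hw)).add ((hy.const_mul α₀).mul hz)).add
      ((hx.const_mul α₂).mul hw)
  simp only [pbracket, pq1, pp1, pq2, pp2, eK1, eK2, h1.fderiv, h2.fderiv]
  simp
  ring
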